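/- Let n ≥ 2 and consider the coupled reduced-state system on a connected weighted graph. Let λ_m(Q) > 0 be the smallest nonzero eigenvalue of the graph Laplacian Q, and let ‖ℒ‖ := max_{1≤j≤n} of the operator norm of ℒ_j with respect to the Frobenius norm on ℂ^{2×2}. Then for every K > 0 and every K-solution (ρ_1,…,ρ_n), one has for all t ≥ 0: √(Σ_{j=1}^n ‖ρ_j(t) − ρ̄(t)‖_F²) ≤ e^{−Kλ_m(Q)t} √(Σ_{j=1}^n ‖ρ_j(0) − ρ̄(0)‖_F²) + n‖ℒ‖/(Kλ_m(Q)). -/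

import Mathlib

/-! Statement 15: ISS-type bound for the deviation-from-average of the coupled
reduced-state system of a diffusively coupled open quantum network. -/

open Finset Matrix
open scoped ComplexOrder

attribute [local instance] Matrix.frobeniusSeminormedAddCommGroup
  Matrix.frobeniusNormedAddCommGroup Matrix.frobeniusNormedSpace

noncomputable section

/-- 2×2 complex matrices (single-qubit operators), with the Frobenius norm. -/
abbrev Mat2 : Type := Matrix (Fin 2) (Fin 2) ℂ

/-- The Lindblad dissipator `D(L)ρ = LρL† − (1/2)(L†Lρ + ρL†L)`. -/
def dissip (L X : Mat2) : Mat2 :=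
  L * X * Lᴴ - (1 / 2 : ℂ) • (Lᴴ * L * X + X * (Lᴴ * L))

/-- The local Lindblad generator `ℒρ = −(i/ℏ)[H,ρ] + Σ_l γ_l D(L_l)ρ`. -/
def lind {ι : Type} [Fintype ι] (hbar : ℝ) (H : Mat2) (γ : ι → ℝ) (L : ι → Mat2)
    (X : Mat2) : Mat2 :=
  (-(Complex.I / (hbar : ℂ))) • (H * X - X * H) + ∑ l, (γ l : ℂ) • dissip (L l) X

/-- The graph Laplacian of the weight matrix `a`. -/
def lap {n : ℕ} (a : Fin n → Fin n → ℝ) : Matrix (Fin n) (Fin n) ℝ :=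
  Matrix.of fun j k => if j = k then ∑ l, a j l else -(a j k)

/-! ### Auxiliary lemmas -/

section Aux

lemma lap_quad_eq {n : ℕ} (a : Fin n → Fin n → ℝ)
    (ha_symm : ∀ j k, a j k = a k j) (ha_diag : ∀ j, a j j = 0) (v : Fin n → ℝ) :
    ∑ j, ∑ k, v j * lap a j k * v k
      = (1/2) * ∑ j, ∑ k, a j k * (v j - v k)^2 := by
  have h1 : ∀ j k : Fin n, v j * lap a j k * v k
      = (if j = k then (∑ l, a j l) * v j * v k else 0) - a j k * v j * v k := by
    intro j k
    by_cases h : j = k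
    · subst h; simp only [lap, Matrix.of_apply, if_pos rfl, if_true]
      rw [ha_diag]; ring
    · simp only [lap, Matrix.of_apply, if_neg h]; ring
  simp_rw [h1, Finset.sum_sub_distrib]
  have h2 : ∑ j : Fin n, ∑ k, (if j = k then (∑ l, a j l) * v j * v k else 0)
      = ∑ j, ∑ l, a j l * v j * v j := by
    apply Finset.sum_congr rfl; intro j _
    rw [Finset.sum_ite_eq Finset.univ j fun k => (∑ l, a j l) * v j * v k]
    simp [Finset.sum_mul]
  have h3 : ∑ j : Fin n, ∑ k, a j k * (v j - v k)^2
      = ∑ j, ∑ k, (a j k * v j * v j + a j k * v k * v k - 2 * (a j k * v j * v k)) := by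
    apply Finset.sum_congr rfl; intro j _; apply Finset.sum_congr rfl; intro k _; ring
  have h4 : ∑ j : Fin n, ∑ k, a j k * v k * v k = ∑ j, ∑ k, a j k * v j * v j := by
    rw [Finset.sum_comm]
    apply Finset.sum_congr rfl; intro j _; apply Finset.sum_congr rfl; intro k _
    rw [ha_symm]
  rw [h2, h3]
  have h5 : ∑ j : Fin n, ∑ k, (a j k * v j * v j + a j k * v k * v k - 2 * (a j k * v j * v k))
      = (∑ j, ∑ k, a j k * v j * v j) + (∑ j, ∑ k, a j k * v k * v k)
        - 2 * ∑ j, ∑ k, a j k * v j * v k := by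
    rw [Finset.mul_sum]
    rw [← Finset.sum_add_distrib, ← Finset.sum_sub_distrib]
    apply Finset.sum_congr rfl; intro j _
    rw [Finset.mul_sum, ← Finset.sum_add_distrib, ← Finset.sum_sub_distrib]
  rw [h5, h4]
  ring

lemma lap_mulVec {n : ℕ} (a : Fin n → Fin n → ℝ) (w : Fin n → ℝ) (j : Fin n) :
    (lap a).mulVec w j = ∑ k, lap a j k * w k := by
  simp [Matrix.mulVec, dotProduct]

lemma constant_of_ker {n : ℕ} (a : Fin n → Fin n → ℝ) (ha_nonneg : ∀ j k, 0 ≤ a j k)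
    (ha_symm : ∀ j k, a j k = a k j) (ha_diag : ∀ j, a j j = 0)
    (ha_conn : (SimpleGraph.fromRel fun j k => 0 < a j k).Connected)
    (w : Fin n → ℝ) (hw : (lap a).mulVec w = 0) : ∀ j k, w j = w k := by
  have hq : ∑ j, ∑ k, w j * lap a j k * w k = 0 := by
    have h1 : ∀ j : Fin n, ∑ k, w j * lap a j k * w k = w j * (lap a).mulVec w j := by
      intro j
      rw [lap_mulVec, Finset.mul_sum]
      apply Finset.sum_congr rfl; intro k _; ring
    simp [h1, hw]
  rw [lap_quad_eq a ha_symm ha_diag w] at hq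
  have hq2 : ∑ j, ∑ k, a j k * (w j - w k)^2 = 0 := by linarith
  have hterm : ∀ j k : Fin n, a j k * (w j - w k)^2 = 0 := by
    intro j k
    have houter := (Finset.sum_eq_zero_iff_of_nonneg (fun j _ =>
      Finset.sum_nonneg (fun k _ => mul_nonneg (ha_nonneg j k) (sq_nonneg _)))).mp hq2 j
      (Finset.mem_univ j)
    exact (Finset.sum_eq_zero_iff_of_nonneg (fun k _ =>
      mul_nonneg (ha_nonneg j k) (sq_nonneg _))).mp houter k (Finset.mem_univ k)
  have hedge : ∀ j k : Fin n, 0 < a j k → w j = w k := by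
    intro j k hpos
    have := hterm j k
    have h2 : (w j - w k)^2 = 0 := by
      rcases mul_eq_zero.mp this with h | h
      · exact absurd h (ne_of_gt hpos)
      · exact h
    have := pow_eq_zero_iff (n := 2) (by norm_num) |>.mp h2
    linarith
  intro j k
  obtain ⟨p⟩ := ha_conn.preconnected j k
  induction p with
  | nil => rfl
  | @cons u x y hadj q ih =>
    have := (SimpleGraph.fromRel_adj _ _ _).mp hadj
    rcases this.2 with h1 | h1
    · exact (hedge _ _ h1).trans ih
    · exact ((hedge _ _ h1).symm).trans ih

lemma lap_isHermitian {n : ℕ} (a : Fin n → Fin n → ℝ) (ha_symm : ∀ j k, a j k = a k j) :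
    (lap a).IsHermitian := by
  ext j k
  simp only [Matrix.conjTranspose_apply, lap, Matrix.of_apply, star_trivial]
  by_cases h : j = k
  · subst h; simp
  · rw [if_neg (fun hh => h hh.symm), if_neg h, ha_symm]

open scoped RealInnerProductSpace in
lemma lap_quad_lower {n : ℕ} (hn : 2 ≤ n) (a : Fin n → Fin n → ℝ)
    (ha_nonneg : ∀ j k, 0 ≤ a j k)
    (ha_symm : ∀ j k, a j k = a k j) (ha_diag : ∀ j, a j j = 0)
    (ha_conn : (SimpleGraph.fromRel fun j k => 0 < a j k).Connected)
    (lam : ℝ)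
    (hlam_lb : ∀ r : ℝ, r ≠ 0 → (∃ v : Fin n → ℝ, v ≠ 0 ∧ (lap a).mulVec v = r • v) → lam ≤ r)
    (v : Fin n → ℝ) (hv : ∑ j, v j = 0) :
    lam * ∑ j, v j ^ 2 ≤ ∑ j, ∑ k, v j * lap a j k * v k := by
  have hQ : (lap a).IsHermitian := lap_isHermitian a ha_symm
  set e := hQ.eigenvectorBasis with he
  set μ := hQ.eigenvalues with hμ
  set V : EuclideanSpace ℝ (Fin n) := (WithLp.equiv 2 _).symm v with hV
  have hVapp : ∀ j, V j = v j := fun j => rfl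
  set QV : EuclideanSpace ℝ (Fin n) := (WithLp.equiv 2 _).symm ((lap a).mulVec v) with hQV
  have hinner : ∀ x y : EuclideanSpace ℝ (Fin n), ⟪x, y⟫ = ∑ j, x j * y j := by
    intro x y
    simp [PiLp.inner_apply, mul_comm]
  set c : Fin n → ℝ := fun i => ∑ j, (e i) j * v j with hc
  have heig : ∀ i, (lap a).mulVec (e i) = μ i • (e i) := fun i => hQ.mulVec_eigenvectorBasis i
  have hswap : ∀ w : Fin n → ℝ, ∑ j, w j * (lap a).mulVec v j = ∑ j, (lap a).mulVec w j * v j := by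
    intro w
    have l : ∑ j, w j * (lap a).mulVec v j = ∑ j, ∑ k, lap a j k * w j * v k := by
      apply Finset.sum_congr rfl; intro j _
      rw [lap_mulVec, Finset.mul_sum]
      apply Finset.sum_congr rfl; intro k _; ring
    have r : ∑ j, (lap a).mulVec w j * v j = ∑ j, ∑ k, lap a j k * w j * v k := by
      rw [Finset.sum_comm]
      apply Finset.sum_congr rfl; intro k _
      rw [lap_mulVec, Finset.sum_mul]
      apply Finset.sum_congr rfl; intro j _
      have hsym : lap a k j = lap a j k := by
        have h0 := congrFun (congrFun hQ j) k
        simpa [Matrix.conjTranspose_apply] using h0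
      rw [← hsym]
    rw [l, r]
  have hVi : ∀ i, ⟪V, e i⟫ = c i := by
    intro i
    rw [hinner]
    apply Finset.sum_congr rfl; intro j _
    rw [hVapp]; ring
  have heQV : ∀ i, ⟪e i, QV⟫ = μ i * c i := by
    intro i
    rw [hinner]
    have h1 : ∑ j, (e i) j * QV j = ∑ j, (e i) j * (lap a).mulVec v j := rfl
    rw [h1, hswap, heig i]
    rw [Finset.mul_sum]
    apply Finset.sum_congr rfl; intro j _
    simp [mul_assoc]
  have hiV : ∀ i, ⟪e i, V⟫ = c i := by
    intro i
    rw [hinner]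
    apply Finset.sum_congr rfl; intro j _
    rw [hVapp]
  have hRHS : ∑ j, ∑ k, v j * lap a j k * v k = ∑ i, c i * (μ i * c i) := by
    have h2 : ∑ j, ∑ k, v j * lap a j k * v k = ⟪V, QV⟫ := by
      rw [hinner]
      apply Finset.sum_congr rfl; intro j _
      have : QV j = (lap a).mulVec v j := rfl
      rw [hVapp, this, lap_mulVec, Finset.mul_sum]
      apply Finset.sum_congr rfl; intro k _; ring
    rw [h2, ← e.sum_inner_mul_inner V QV]
    apply Finset.sum_congr rfl; intro i _
    rw [hVi, heQV]
  have hLHS : ∑ j, v j ^ 2 = ∑ i, c i ^ 2 := by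
    have h2 : ∑ j, v j ^ 2 = ⟪V, V⟫ := by
      rw [hinner]
      apply Finset.sum_congr rfl; intro j _
      rw [hVapp]; ring
    rw [h2, ← e.sum_inner_mul_inner V V]
    apply Finset.sum_congr rfl; intro i _
    rw [hVi, hiV]; ring
  rw [hRHS, hLHS, Finset.mul_sum]
  apply Finset.sum_le_sum
  intro i _
  by_cases hmu : μ i = 0
  · have hker : (lap a).mulVec (e i) = 0 := by
      rw [heig i, hmu, zero_smul]
    have hconst := constant_of_ker a ha_nonneg ha_symm ha_diag ha_conn (e i) hker
    have hj0 : (0 : ℕ) < n := by omega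
    have hci : c i = 0 := by
      have hcst : ∀ j, (e i) j = (e i) ⟨0, hj0⟩ := fun j => hconst j ⟨0, hj0⟩
      calc c i = ∑ j, (e i) ⟨0, hj0⟩ * v j := by
            apply Finset.sum_congr rfl; intro j _; rw [hcst j]
        _ = (e i) ⟨0, hj0⟩ * ∑ j, v j := by rw [Finset.mul_sum]
        _ = 0 := by rw [hv, mul_zero]
    rw [hci]; simp
  · have hle : lam ≤ μ i := by
      apply hlam_lb (μ i) hmu
      refine ⟨e i, ?_, heig i⟩
      intro h0
      have hz : e i = 0 := by
        ext j; exact congrFun h0 j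
      have hn1 := e.orthonormal.1 i
      rw [hz, norm_zero] at hn1
      norm_num at hn1
    have hmm := mul_le_mul_of_nonneg_right hle (sq_nonneg (c i))
    calc lam * c i ^ 2 ≤ μ i * c i ^ 2 := hmm
      _ = c i * (μ i * c i) := by ring

/-! coordinates -/

abbrev CIdx : Type := Fin 2 × Fin 2 × Bool

def coord (M : Mat2) (c : CIdx) : ℝ :=
  if c.2.2 then (M c.1 c.2.1).re else (M c.1 c.2.1).im

lemma coord_add (M N : Mat2) (c : CIdx) : coord (M + N) c = coord M c + coord N c := by
  unfold coord; by_cases h : c.2.2 <;> simp [h]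

lemma coord_sub (M N : Mat2) (c : CIdx) : coord (M - N) c = coord M c - coord N c := by
  unfold coord; by_cases h : c.2.2 <;> simp [h]

lemma coord_smul (r : ℝ) (M : Mat2) (c : CIdx) : coord (r • M) c = r * coord M c := by
  unfold coord; by_cases h : c.2.2 <;> simp [h, Complex.real_smul]

lemma coord_sum {κ : Type*} [Fintype κ] (f : κ → Mat2) (c : CIdx) :
    coord (∑ k, f k) c = ∑ k, coord (f k) c := by
  unfold coord
  by_cases h : c.2.2 <;> simp [h, Complex.re_sum, Complex.im_sum, Matrix.sum_apply]

lemma norm_sq_eq_sum_coord (M : Mat2) : ‖M‖ ^ 2 = ∑ c : CIdx, coord M c ^ 2 := by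
  have h1 : ‖M‖ = (∑ p, ∑ q, ‖M p q‖ ^ (2 : ℝ)) ^ (1/2 : ℝ) := Matrix.frobenius_norm_def M
  have hs : (0:ℝ) ≤ ∑ p, ∑ q, ‖M p q‖ ^ (2 : ℝ) := by
    apply Finset.sum_nonneg; intro p _; apply Finset.sum_nonneg; intro q _
    positivity
  have h2 : ‖M‖ ^ 2 = ∑ p, ∑ q, ‖M p q‖ ^ (2:ℝ) := by
    rw [h1, ← Real.rpow_natCast (_ ^ (1/2:ℝ)) 2, ← Real.rpow_mul hs]
    norm_num
  rw [h2]
  have h3 : ∀ (p q : Fin 2), ‖M p q‖ ^ (2:ℝ) = (M p q).re^2 + (M p q).im^2 := by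
    intro p q
    rw [show ((2:ℝ)) = ((2:ℕ):ℝ) by norm_num, Real.rpow_natCast]
    rw [← Complex.normSq_eq_norm_sq]
    simp [Complex.normSq_apply]; ring
  simp_rw [h3]
  rw [Fintype.sum_prod_type]
  apply Finset.sum_congr rfl; intro p _
  rw [Fintype.sum_prod_type]
  apply Finset.sum_congr rfl; intro q _
  rw [Fintype.sum_bool]
  simp [coord]

lemma coord_hasDerivAt {f : ℝ → Mat2} {f' : Mat2} {t : ℝ} (hf : HasDerivAt f f' t) (c : CIdx) :
    HasDerivAt (fun s => coord (f s) c) (coord f' c) t := by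
  have hentry : HasDerivAt (fun s => f s c.1 c.2.1) (f' c.1 c.2.1) t := by
    let E : Mat2 →ₗ[ℝ] ℂ :=
      { toFun := fun M => M c.1 c.2.1
        map_add' := fun _ _ => rfl
        map_smul' := fun _ _ => rfl }
    have h := (E.toContinuousLinearMap.hasFDerivAt).comp_hasDerivAt t hf
    exact h
  unfold coord
  by_cases h : c.2.2
  · simp only [h, if_true]
    exact (Complex.reCLM.hasFDerivAt).comp_hasDerivAt t hentry
  · simp only [h, if_false]
    exact (Complex.imCLM.hasFDerivAt).comp_hasDerivAt t hentry

lemma density_norm_le_one (M : Mat2) (hpsd : M.PosSemidef) (htr : M.trace = 1) : ‖M‖ ≤ 1 := by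
  set α : ℝ := (M 0 0).re with hα
  set δ : ℝ := (M 1 1).re with hδ
  set b : ℂ := M 0 1 with hb
  have hherm : ∀ i j, star (M j i) = M i j := fun i j => congrFun (congrFun hpsd.1 i) j
  have h00 : M 0 0 = (α : ℂ) := by
    have := hherm 0 0
    rw [Complex.ext_iff]
    constructor
    · simp [hα]
    · have him := congrArg Complex.im this
      simp at him ⊢; linarith
  have h11 : M 1 1 = (δ : ℂ) := by
    have := hherm 1 1
    rw [Complex.ext_iff]
    constructor
    · simp [hδ]
    · have him := congrArg Complex.im this
      simp at him ⊢; linarith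
  have h10 : M 1 0 = star b := by rw [hb, ← hherm 0 1, star_star]
  have htr' : α + δ = 1 := by
    have := congrArg Complex.re htr
    simp [Matrix.trace, Matrix.diag, Fin.sum_univ_two] at this
    convert this using 2 <;> simp [hα, hδ]
  have hα0 : 0 ≤ α := by
    have h := hpsd.re_dotProduct_nonneg (Pi.single 0 1)
    simpa [Matrix.mulVec, dotProduct, Fin.sum_univ_two, Pi.single_apply, h00] using h
  have hδ0 : 0 ≤ δ := by
    have h := hpsd.re_dotProduct_nonneg (Pi.single 1 1)
    simpa [Matrix.mulVec, dotProduct, Fin.sum_univ_two, Pi.single_apply, h11] using h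
  have hquad : ∀ t : ℝ, 0 ≤ α * (t * t) + (-2 * Complex.normSq b) * t + Complex.normSq b * δ := by
    intro t
    have h := hpsd.re_dotProduct_nonneg ![(t : ℂ), -(star b)]
    have hexp : (dotProduct (star ![(t:ℂ), -(star b)]) (M *ᵥ ![(t:ℂ), -(star b)])).re
        = α * (t * t) + (-2 * Complex.normSq b) * t + Complex.normSq b * δ := by
      simp [Matrix.mulVec, dotProduct, Fin.sum_univ_two, h00, h11, h10, hb,
        Complex.normSq_apply, Complex.add_re, Complex.mul_re, Complex.mul_im]
      ring
    rw [← hexp]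
    simpa [RCLike.re_to_complex] using h
  have hdisc := discrim_le_zero hquad
  rw [discrim] at hdisc
  have hbsq : Complex.normSq b ≤ α * δ ∨ Complex.normSq b = 0 := by
    rcases eq_or_lt_of_le (Complex.normSq_nonneg b) with h | h
    · right; exact h.symm
    · left; nlinarith [hdisc]
  have hnormsq : ‖M‖ ^ 2 = α^2 + δ^2 + 2 * Complex.normSq b := by
    have h1 : ‖M‖ = (∑ p, ∑ q, ‖M p q‖ ^ (2 : ℝ)) ^ (1/2 : ℝ) := Matrix.frobenius_norm_def M
    have hs : (0:ℝ) ≤ ∑ p, ∑ q, ‖M p q‖ ^ (2 : ℝ) := by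
      apply Finset.sum_nonneg; intro p _; apply Finset.sum_nonneg; intro q _; positivity
    have h2 : ‖M‖ ^ 2 = ∑ p, ∑ q, ‖M p q‖ ^ (2:ℝ) := by
      rw [h1, ← Real.rpow_natCast (_ ^ (1/2:ℝ)) 2, ← Real.rpow_mul hs]
      norm_num
    have h3 : ∀ z : ℂ, ‖z‖ ^ (2:ℝ) = Complex.normSq z := by
      intro z
      rw [show ((2:ℝ)) = ((2:ℕ):ℝ) by norm_num, Real.rpow_natCast]
      rw [Complex.sq_norm]
    rw [h2]
    simp_rw [h3]
    rw [Fin.sum_univ_two, Fin.sum_univ_two, Fin.sum_univ_two]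
    rw [h00, h11, h10]
    simp [Complex.normSq_apply]
    ring
  have hnorm_le : ‖M‖ ^ 2 ≤ 1 := by
    rcases hbsq with h | h
    · rw [hnormsq]; nlinarith
    · rw [hnormsq, h]; nlinarith
  nlinarith [norm_nonneg M, hnorm_le]

lemma skew_sum_zero {n : ℕ} (a : Fin n → Fin n → ℝ) (ha_symm : ∀ j k, a j k = a k j)
    (z : Fin n → ℝ) : ∑ j, ∑ k, a j k * (z k - z j) = 0 := by
  have h1 : ∑ j : Fin n, ∑ k, a j k * z k = ∑ j, ∑ k, a j k * z j := by
    rw [Finset.sum_comm]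
    apply Finset.sum_congr rfl; intro j _
    apply Finset.sum_congr rfl; intro k _
    rw [ha_symm]
  have h2 : ∀ (j k : Fin n), a j k * (z k - z j) = a j k * z k - a j k * z j :=
    fun j k => by ring
  simp_rw [h2, Finset.sum_sub_distrib]
  rw [h1, sub_self]

lemma lap_row {n : ℕ} (a : Fin n → Fin n → ℝ) (ha_diag : ∀ j, a j j = 0)
    (v : Fin n → ℝ) (j : Fin n) :
    v j * ∑ k, a j k * (v k - v j) = - ∑ k, v j * lap a j k * v k := by
  have h1 : ∀ k : Fin n, v j * lap a j k * v k
      = (if j = k then (∑ l, a j l) * v j * v k else 0) - a j k * v j * v k := by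
    intro k
    by_cases h : j = k
    · subst h; simp only [lap, Matrix.of_apply, if_pos rfl, if_true]
      rw [ha_diag]; ring
    · simp only [lap, Matrix.of_apply, if_neg h]; ring
  have key : ∑ k, v j * lap a j k * v k
      = (∑ l, a j l * (v j * v j)) - ∑ k, a j k * v j * v k := by
    simp_rw [h1]
    rw [Finset.sum_sub_distrib]
    congr 1
    rw [Finset.sum_ite_eq Finset.univ j fun k => (∑ l, a j l) * v j * v k]
    simp only [Finset.mem_univ, if_true]
    rw [Finset.sum_mul, Finset.sum_mul]
    apply Finset.sum_congr rfl; intro l _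
    ring
  rw [key, Finset.mul_sum, neg_sub, ← Finset.sum_sub_distrib]
  apply Finset.sum_congr rfl; intro k _
  ring

lemma sum_sub_mean_sq {n : ℕ} (hn : (n:ℝ) ≠ 0) (y : Fin n → ℝ) :
    ∑ j, (y j - (n:ℝ)⁻¹ * ∑ i, y i)^2 ≤ ∑ j, y j^2 := by
  have hexp : ∀ j : Fin n, (y j - (n:ℝ)⁻¹ * ∑ i, y i)^2
      = y j^2 - 2*(n:ℝ)⁻¹*(∑ i, y i)*y j + ((n:ℝ)⁻¹*(∑ i, y i))^2 := fun j => by ring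
  simp_rw [hexp]
  rw [Finset.sum_add_distrib, Finset.sum_sub_distrib, ← Finset.mul_sum,
    Finset.sum_const, Finset.card_univ, Fintype.card_fin, nsmul_eq_mul]
  have h0 : (0:ℝ) ≤ (n:ℝ)⁻¹ * (∑ i, y i)^2 := by positivity
  have hne : (n:ℝ) * ((n:ℝ)⁻¹ * (∑ i, y i))^2 = (n:ℝ)⁻¹ * (∑ i, y i)^2 := by
    field_simp
  nlinarith [sq_nonneg (∑ i, y i)]

lemma cs_double {n : ℕ} (x y : Fin n → CIdx → ℝ) :
    (∑ j, ∑ c : CIdx, x j c * y j c) ≤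
      Real.sqrt (∑ j, ∑ c : CIdx, x j c ^ 2) * Real.sqrt (∑ j, ∑ c : CIdx, y j c ^ 2) := by
  have hp := Finset.sum_mul_sq_le_sq_mul_sq Finset.univ
    (fun p : Fin n × CIdx => x p.1 p.2) (fun p : Fin n × CIdx => y p.1 p.2)
  have e1 : ∑ p : Fin n × CIdx, x p.1 p.2 * y p.1 p.2 = ∑ j, ∑ c : CIdx, x j c * y j c := by
    rw [Fintype.sum_prod_type]
  have e2 : ∑ p : Fin n × CIdx, x p.1 p.2 ^ 2 = ∑ j, ∑ c : CIdx, x j c ^ 2 := by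
    rw [Fintype.sum_prod_type]
  have e3 : ∑ p : Fin n × CIdx, y p.1 p.2 ^ 2 = ∑ j, ∑ c : CIdx, y j c ^ 2 := by
    rw [Fintype.sum_prod_type]
  rw [e1, e2, e3] at hp
  have hx2 : (0:ℝ) ≤ ∑ j, ∑ c : CIdx, x j c ^ 2 :=
    Finset.sum_nonneg fun j _ => Finset.sum_nonneg fun c _ => sq_nonneg _
  calc (∑ j, ∑ c : CIdx, x j c * y j c) ≤ |∑ j, ∑ c : CIdx, x j c * y j c| := le_abs_self _
    _ = Real.sqrt ((∑ j, ∑ c : CIdx, x j c * y j c)^2) := (Real.sqrt_sq_eq_abs _).symm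
    _ ≤ Real.sqrt ((∑ j, ∑ c : CIdx, x j c ^ 2) * ∑ j, ∑ c : CIdx, y j c ^ 2) :=
        Real.sqrt_le_sqrt hp
    _ = _ := Real.sqrt_mul hx2 _

end Aux

set_option maxHeartbeats 1000000 in
theorem stmt15 {n : ℕ} (hn : 2 ≤ n) {ι : Type} [Fintype ι] (hbar : ℝ) (hhbar : 0 < hbar)
    (γ : ι → ℝ) (hγ : ∀ l, 0 < γ l)
    (H : Fin n → Mat2) (hH : ∀ j, (H j).IsHermitian)
    (L : ι → Fin n → Mat2)
    -- symmetric nonnegative weights with zero diagonal and connected graph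
    (a : Fin n → Fin n → ℝ) (ha_nonneg : ∀ j k, 0 ≤ a j k)
    (ha_symm : ∀ j k, a j k = a k j) (ha_diag : ∀ j, a j j = 0)
    (ha_conn : (SimpleGraph.fromRel fun j k => 0 < a j k).Connected)
    -- `lam` is the smallest nonzero eigenvalue of the Laplacian
    (lam : ℝ) (hlam_pos : 0 < lam)
    (hlam : IsLeast {r : ℝ | r ≠ 0 ∧ ∃ v : Fin n → ℝ, v ≠ 0 ∧ (lap a).mulVec v = r • v} lam)
    -- `nL` is the maximum over `j` of the operator norm of `ℒ_j` w.r.t. the Frobenius norm,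
    -- i.e. the least uniform Lipschitz bound of the local generators
    (nL : ℝ)
    (hnL : IsLeast {c : ℝ | 0 ≤ c ∧ ∀ (j : Fin n) (X : Mat2),
      ‖lind hbar (H j) γ (fun l => L l j) X‖ ≤ c * ‖X‖} nL)
    -- a `K`-solution of the coupled reduced-state system
    (K : ℝ) (hK : 0 < K)
    (ρ : Fin n → ℝ → Mat2)
    (hden : ∀ j, ∀ t ≥ (0 : ℝ), (ρ j t).PosSemidef ∧ (ρ j t).trace = 1)
    (hode : ∀ j, ∀ t ≥ (0 : ℝ), HasDerivAt (ρ j)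
      (lind hbar (H j) γ (fun l => L l j) (ρ j t) + K • ∑ k, a j k • (ρ k t - ρ j t)) t) :
    ∀ t ≥ (0 : ℝ),
      Real.sqrt (∑ j, ‖ρ j t - (n : ℝ)⁻¹ • ∑ i, ρ i t‖ ^ 2) ≤
        Real.exp (-(K * lam) * t) * Real.sqrt (∑ j, ‖ρ j 0 - (n : ℝ)⁻¹ • ∑ i, ρ i 0‖ ^ 2) +
          n * nL / (K * lam) := by
  intro t ht
  have hn2 : (2:ℝ) ≤ (n:ℝ) := by exact_mod_cast hn
  have hn0 : (0:ℝ) < n := by linarith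
  have hnne : (n:ℝ) ≠ 0 := ne_of_gt hn0
  have hnL0 : 0 ≤ nL := hnL.1.1
  have hα : 0 < K * lam := mul_pos hK hlam_pos
  -- main objects
  set u : Fin n → ℝ → Mat2 := fun j s => lind hbar (H j) γ (fun l => L l j) (ρ j s) with hu
  set R : Fin n → ℝ → Mat2 := fun j s =>
    u j s + K • ∑ k, a j k • (ρ k s - ρ j s) with hRdef
  set dm : Fin n → ℝ → Mat2 := fun j s => ρ j s - (n:ℝ)⁻¹ • ∑ i, ρ i s with hdmdef
  set dd : Fin n → ℝ → Mat2 := fun j s => R j s - (n:ℝ)⁻¹ • ∑ i, R i s with hdddef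
  have hRode : ∀ j, ∀ s ≥ (0:ℝ), HasDerivAt (ρ j) (R j s) s := fun j s hs => hode j s hs
  have hddiff : ∀ j, ∀ s ≥ (0:ℝ), HasDerivAt (dm j) (dd j s) s := by
    intro j s hs
    exact (hRode j s hs).sub ((HasDerivAt.fun_sum (fun i _ => hRode i s hs)).const_smul (n:ℝ)⁻¹)
  set W : ℝ → ℝ := fun s => ∑ j, ∑ c : CIdx, coord (dm j s) c ^ 2 with hWdef
  have hWnn : ∀ s, 0 ≤ W s := fun s =>
    Finset.sum_nonneg fun j _ => Finset.sum_nonneg fun c _ => sq_nonneg _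
  have hWeq : ∀ s, W s = ∑ j, ‖dm j s‖^2 := by
    intro s
    exact Finset.sum_congr rfl fun j _ => (norm_sq_eq_sum_coord _).symm
  set W' : ℝ → ℝ := fun s => ∑ j, ∑ c : CIdx, 2 * coord (dm j s) c * coord (dd j s) c
    with hW'def
  have hWd : ∀ s ≥ (0:ℝ), HasDerivAt W (W' s) s := by
    intro s hs
    apply HasDerivAt.fun_sum; intro j _
    apply HasDerivAt.fun_sum; intro c _
    have h := (coord_hasDerivAt (hddiff j s hs) c).pow 2
    norm_num at h
    exact h
  -- sum of deviations vanishes, coordinatewise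
  have hxd : ∀ s j c, coord (dm j s) c
      = coord (ρ j s) c - (n:ℝ)⁻¹ * ∑ i, coord (ρ i s) c := by
    intro s j c
    rw [show dm j s = ρ j s - (n:ℝ)⁻¹ • ∑ i, ρ i s from rfl, coord_sub, coord_smul, coord_sum]
  have hxsum : ∀ s, ∀ c : CIdx, ∑ j, coord (dm j s) c = 0 := by
    intro s c
    simp_rw [hxd s]
    rw [Finset.sum_sub_distrib, Finset.sum_const, Finset.card_univ, Fintype.card_fin,
      nsmul_eq_mul]
    field_simp
    ring
  -- coordinates of dd
  have hdd : ∀ s j (c : CIdx), coord (dd j s) c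
      = (coord (u j s) c - (n:ℝ)⁻¹ * ∑ i, coord (u i s) c)
        + K * ∑ k, a j k * (coord (dm k s) c - coord (dm j s) c) := by
    intro s j c
    have hRc : ∀ i, coord (R i s) c
        = coord (u i s) c + K * ∑ k, a i k * (coord (ρ k s) c - coord (ρ i s) c) := by
      intro i
      rw [show R i s = u i s + K • ∑ k, a i k • (ρ k s - ρ i s) from rfl,
        coord_add, coord_smul, coord_sum]
      congr 1
      congr 1
      apply Finset.sum_congr rfl; intro k _
      rw [coord_smul, coord_sub]
    have hsumR : ∑ i, coord (R i s) c = ∑ i, coord (u i s) c := by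
      simp_rw [hRc]
      rw [Finset.sum_add_distrib]
      have h0 : ∑ i, K * ∑ k, a i k * (coord (ρ k s) c - coord (ρ i s) c) = 0 := by
        rw [← Finset.mul_sum, skew_sum_zero a ha_symm (fun i => coord (ρ i s) c), mul_zero]
      rw [h0, add_zero]
    have hdc : coord (dd j s) c = coord (R j s) c - (n:ℝ)⁻¹ * ∑ i, coord (R i s) c := by
      rw [show dd j s = R j s - (n:ℝ)⁻¹ • ∑ i, R i s from rfl, coord_sub, coord_smul, coord_sum]
    rw [hdc, hsumR, hRc j]
    have hterm : ∀ k, a j k * (coord (ρ k s) c - coord (ρ j s) c)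
        = a j k * (coord (dm k s) c - coord (dm j s) c) := by
      intro k
      rw [hxd s k, hxd s j]
      ring
    simp_rw [hterm]
    ring
  -- the mean-deviation bound for the Lindblad term
  have hG : ∀ s ≥ (0:ℝ),
      (∑ j, ∑ c : CIdx, (coord (u j s) c - (n:ℝ)⁻¹ * ∑ i, coord (u i s) c)^2) ≤ n * nL^2 := by
    intro s hs
    rw [Finset.sum_comm]
    calc ∑ c : CIdx, ∑ j, (coord (u j s) c - (n:ℝ)⁻¹ * ∑ i, coord (u i s) c)^2
        ≤ ∑ c : CIdx, ∑ j, coord (u j s) c^2 := by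
          apply Finset.sum_le_sum; intro c _
          exact sum_sub_mean_sq hnne (fun j => coord (u j s) c)
      _ = ∑ j, ∑ c : CIdx, coord (u j s) c ^2 := Finset.sum_comm
      _ = ∑ j, ‖u j s‖^2 := Finset.sum_congr rfl fun j _ => (norm_sq_eq_sum_coord _).symm
      _ ≤ ∑ j : Fin n, nL^2 := by
          apply Finset.sum_le_sum; intro j _
          have hb1 : ‖u j s‖ ≤ nL * ‖ρ j s‖ := hnL.1.2 j (ρ j s)
          have hb2 : ‖ρ j s‖ ≤ 1 := density_norm_le_one _ (hden j s hs).1 (hden j s hs).2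
          have hb3 : ‖u j s‖ ≤ nL := by nlinarith [norm_nonneg (ρ j s)]
          nlinarith [norm_nonneg (u j s)]
      _ = n * nL^2 := by
          rw [Finset.sum_const, Finset.card_univ, Fintype.card_fin, nsmul_eq_mul]
  -- the coupling (Laplacian) bound
  have hB : ∀ s, (∑ c : CIdx, ∑ j, coord (dm j s) c *
      ∑ k, a j k * (coord (dm k s) c - coord (dm j s) c)) ≤ -lam * W s := by
    intro s
    have hper : ∀ c : CIdx, ∑ j, coord (dm j s) c *
        ∑ k, a j k * (coord (dm k s) c - coord (dm j s) c)
        ≤ -lam * ∑ j, coord (dm j s) c ^ 2 := by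
      intro c
      have hrow : ∑ j, coord (dm j s) c * ∑ k, a j k * (coord (dm k s) c - coord (dm j s) c)
          = - ∑ j, ∑ k, coord (dm j s) c * lap a j k * coord (dm k s) c := by
        rw [← Finset.sum_neg_distrib]
        apply Finset.sum_congr rfl; intro j _
        exact lap_row a ha_diag (fun i => coord (dm i s) c) j
      rw [hrow]
      have hq := lap_quad_lower hn a ha_nonneg ha_symm ha_diag ha_conn lam
        (fun r hr hv => hlam.2 ⟨hr, hv⟩) (fun i => coord (dm i s) c) (hxsum s c)
      linarith
    calc ∑ c : CIdx, ∑ j, coord (dm j s) c *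
          ∑ k, a j k * (coord (dm k s) c - coord (dm j s) c)
        ≤ ∑ c : CIdx, -lam * ∑ j, coord (dm j s) c ^ 2 :=
          Finset.sum_le_sum fun c _ => hper c
      _ = -lam * ∑ c : CIdx, ∑ j, coord (dm j s) c ^ 2 := by rw [Finset.mul_sum]
      _ = -lam * W s := by rw [Finset.sum_comm]
  -- differential inequality
  have hW'le : ∀ s ≥ (0:ℝ), W' s ≤ -(2*(K*lam)) * W s
      + 2*(Real.sqrt n * nL) * Real.sqrt (W s) := by
    intro s hs
    have hsplit : W' s = 2 * (∑ j, ∑ c : CIdx, coord (dm j s) c *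
          (coord (u j s) c - (n:ℝ)⁻¹ * ∑ i, coord (u i s) c))
        + 2*K*(∑ c : CIdx, ∑ j, coord (dm j s) c *
          ∑ k, a j k * (coord (dm k s) c - coord (dm j s) c)) := by
      have h0 : W' s = ∑ j, ∑ c : CIdx,
          (2 * (coord (dm j s) c * (coord (u j s) c - (n:ℝ)⁻¹ * ∑ i, coord (u i s) c))
            + (2*K) * (coord (dm j s) c *
               ∑ k, a j k * (coord (dm k s) c - coord (dm j s) c))) := by
        apply Finset.sum_congr rfl; intro j _
        apply Finset.sum_congr rfl; intro c _
        rw [hdd s j c]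
        ring
      rw [h0]
      have h1 : ∑ j, ∑ c : CIdx,
          (2 * (coord (dm j s) c * (coord (u j s) c - (n:ℝ)⁻¹ * ∑ i, coord (u i s) c))
            + (2*K) * (coord (dm j s) c *
               ∑ k, a j k * (coord (dm k s) c - coord (dm j s) c)))
          = (∑ j, ∑ c : CIdx, 2 * (coord (dm j s) c *
              (coord (u j s) c - (n:ℝ)⁻¹ * ∑ i, coord (u i s) c)))
            + ∑ j, ∑ c : CIdx, (2*K) * (coord (dm j s) c *
              ∑ k, a j k * (coord (dm k s) c - coord (dm j s) c)) := by
        rw [← Finset.sum_add_distrib]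
        apply Finset.sum_congr rfl; intro j _
        rw [← Finset.sum_add_distrib]
      rw [h1]
      have hA1 : (2:ℝ) * (∑ j, ∑ c : CIdx, coord (dm j s) c *
            (coord (u j s) c - (n:ℝ)⁻¹ * ∑ i, coord (u i s) c))
          = ∑ j, ∑ c : CIdx, 2 * (coord (dm j s) c *
            (coord (u j s) c - (n:ℝ)⁻¹ * ∑ i, coord (u i s) c)) := by
        rw [Finset.mul_sum]
        apply Finset.sum_congr rfl; intro j _
        rw [Finset.mul_sum]
      have hB1 : (2*K) * (∑ c : CIdx, ∑ j, coord (dm j s) c *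
            ∑ k, a j k * (coord (dm k s) c - coord (dm j s) c))
          = ∑ j, ∑ c : CIdx, (2*K) * (coord (dm j s) c *
            ∑ k, a j k * (coord (dm k s) c - coord (dm j s) c)) := by
        rw [Finset.mul_sum]
        have hcomm : ∑ c : CIdx, (2*K) * ∑ j, (coord (dm j s) c *
              ∑ k, a j k * (coord (dm k s) c - coord (dm j s) c))
            = ∑ c : CIdx, ∑ j, (2*K) * (coord (dm j s) c *
              ∑ k, a j k * (coord (dm k s) c - coord (dm j s) c)) := by
          apply Finset.sum_congr rfl; intro c _
          rw [Finset.mul_sum]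
        rw [hcomm, Finset.sum_comm]
      rw [← hA1, ← hB1]
    have hA : (∑ j, ∑ c : CIdx, coord (dm j s) c *
        (coord (u j s) c - (n:ℝ)⁻¹ * ∑ i, coord (u i s) c))
        ≤ Real.sqrt (W s) * (Real.sqrt n * nL) := by
      have hcs := cs_double (fun j c => coord (dm j s) c)
        (fun j c => coord (u j s) c - (n:ℝ)⁻¹ * ∑ i, coord (u i s) c)
      have h2 : Real.sqrt (∑ j, ∑ c : CIdx,
          (coord (u j s) c - (n:ℝ)⁻¹ * ∑ i, coord (u i s) c)^2) ≤ Real.sqrt n * nL := by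
        calc Real.sqrt (∑ j, ∑ c : CIdx,
              (coord (u j s) c - (n:ℝ)⁻¹ * ∑ i, coord (u i s) c)^2)
            ≤ Real.sqrt (n * nL^2) := Real.sqrt_le_sqrt (hG s hs)
          _ = Real.sqrt n * nL := by
              rw [Real.sqrt_mul hn0.le, Real.sqrt_sq hnL0]
      calc (∑ j, ∑ c : CIdx, coord (dm j s) c *
            (coord (u j s) c - (n:ℝ)⁻¹ * ∑ i, coord (u i s) c))
          ≤ Real.sqrt (∑ j, ∑ c : CIdx, coord (dm j s) c ^ 2) *
            Real.sqrt (∑ j, ∑ c : CIdx,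
              (coord (u j s) c - (n:ℝ)⁻¹ * ∑ i, coord (u i s) c)^2) := hcs
        _ ≤ Real.sqrt (W s) * (Real.sqrt n * nL) := by
            apply mul_le_mul_of_nonneg_left h2 (Real.sqrt_nonneg _)
    have hBs := hB s
    rw [hsplit]
    nlinarith [hK]
  -- the ODE comparison, with regularization
  have key : ∀ η > (0:ℝ), Real.sqrt (W t) ≤
      Real.exp (-(K*lam)*t) * Real.sqrt (W 0 + η)
        + (Real.sqrt n * nL)/(K*lam) + Real.sqrt η := by
    intro η hη
    have hc00 : 0 ≤ Real.sqrt n * nL := mul_nonneg (Real.sqrt_nonneg _) hnL0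
    set ε : ℝ := Real.sqrt n * nL + (K*lam) * Real.sqrt η with hεdef
    have hε0 : 0 ≤ ε := add_nonneg hc00 (mul_nonneg hα.le (Real.sqrt_nonneg _))
    set g : ℝ → ℝ := fun s => Real.sqrt (W s + η) with hgdef
    have hWη : ∀ s, 0 < W s + η := fun s => by linarith [hWnn s]
    have hgpos : ∀ s, 0 < g s := fun s => Real.sqrt_pos.mpr (hWη s)
    set g' : ℝ → ℝ := fun s => 1 / (2 * Real.sqrt (W s + η)) * W' s with hg'def
    have hgd : ∀ s ≥ (0:ℝ), HasDerivAt g (g' s) s := by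
      intro s hs
      have h1 : HasDerivAt (fun r => W r + η) (W' s) s := (hWd s hs).add_const η
      exact (Real.hasDerivAt_sqrt (ne_of_gt (hWη s))).comp s h1
    have hgb : ∀ s ≥ (0:ℝ), g' s ≤ -(K*lam) * g s + ε := by
      intro s hs
      have hS : Real.sqrt (W s + η) ^ 2 = W s + η := Real.sq_sqrt (hWη s).le
      have hS0 : 0 < Real.sqrt (W s + η) := hgpos s
      have hsW : Real.sqrt (W s) ≤ Real.sqrt (W s + η) := Real.sqrt_le_sqrt (by linarith)
      have hsη : Real.sqrt η ≤ Real.sqrt (W s + η) := Real.sqrt_le_sqrt (by linarith [hWnn s])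
      have hηs : Real.sqrt η ^ 2 = η := Real.sq_sqrt hη.le
      have hW's := hW'le s hs
      have hsWnn : 0 ≤ Real.sqrt (W s) := Real.sqrt_nonneg _
      have h2S : 0 < 2 * Real.sqrt (W s + η) := by linarith
      show 1 / (2 * Real.sqrt (W s + η)) * W' s ≤ -(K*lam) * Real.sqrt (W s + η) + ε
      rw [one_div, inv_mul_le_iff₀ h2S]
      have e1 : Real.sqrt n * nL * Real.sqrt (W s) ≤ Real.sqrt n * nL * Real.sqrt (W s + η) :=
        mul_le_mul_of_nonneg_left hsW hc00
      have e2 : Real.sqrt η * Real.sqrt η ≤ Real.sqrt η * Real.sqrt (W s + η) :=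
        mul_le_mul_of_nonneg_left hsη (Real.sqrt_nonneg _)
      have e3 : (K*lam) * (Real.sqrt η * Real.sqrt η) ≤
          (K*lam) * (Real.sqrt η * Real.sqrt (W s + η)) :=
        mul_le_mul_of_nonneg_left e2 hα.le
      nlinarith [hW's, e1, e3, hS, hηs]
    -- comparison function
    set F : ℝ → ℝ := fun s => Real.exp ((K*lam)*s) * g s
      - (ε/(K*lam)) * Real.exp ((K*lam)*s) with hFdef
    have hFd : ∀ s ≥ (0:ℝ), HasDerivAt F
        (Real.exp ((K*lam)*s) * (g' s + (K*lam) * g s - ε)) s := by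
      intro s hs
      have he : HasDerivAt (fun r => Real.exp ((K*lam)*r)) ((K*lam) * Real.exp ((K*lam)*s)) s := by
        have h1 : HasDerivAt (fun r : ℝ => (K*lam)*r) (K*lam) s := by
          simpa using (hasDerivAt_id s).const_mul (K*lam)
        have h2 := h1.exp
        simpa [mul_comm] using h2
      have h2 := (he.mul (hgd s hs)).sub (he.const_mul (ε/(K*lam)))
      refine h2.congr_deriv ?_
      rw [← mul_assoc (ε/(K*lam)), div_mul_cancel₀ ε hα.ne']
      ring
    have hF'np : ∀ s ≥ (0:ℝ), Real.exp ((K*lam)*s) * (g' s + (K*lam) * g s - ε) ≤ 0 := by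
      intro s hs
      have h1 := hgb s hs
      have h2 : 0 < Real.exp ((K*lam)*s) := Real.exp_pos _
      nlinarith
    have hFanti : AntitoneOn F (Set.Ici (0:ℝ)) := by
      apply antitoneOn_of_hasDerivWithinAt_nonpos (convex_Ici 0)
        (f' := fun s => Real.exp ((K*lam)*s) * (g' s + (K*lam) * g s - ε))
      · intro s hs
        exact ((hFd s hs).continuousAt).continuousWithinAt
      · intro s hs
        rw [interior_Ici] at hs
        exact ((hFd s (le_of_lt hs)).hasDerivWithinAt)
      · intro s hs
        rw [interior_Ici] at hs
        exact hF'np s (le_of_lt hs)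
    have hFt : F t ≤ F 0 := hFanti Set.self_mem_Ici (Set.mem_Ici.mpr ht) ht
    have hexp0 : Real.exp ((K*lam)*0) = 1 := by norm_num
    have h1 : Real.exp ((K*lam)*t) * g t - ε/(K*lam) * Real.exp ((K*lam)*t)
        ≤ g 0 - ε/(K*lam) := by
      have := hFt
      rw [hFdef] at this
      simpa [hexp0] using this
    have het : 0 < Real.exp ((K*lam)*t) := Real.exp_pos _
    have key2 : Real.exp ((K*lam)*t) * g t
        ≤ g 0 - ε/(K*lam) + ε/(K*lam) * Real.exp ((K*lam)*t) := by linarith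
    have hgt : g t ≤ Real.exp (-((K*lam)*t)) * g 0 + ε/(K*lam) := by
      rw [Real.exp_neg]
      have hinv : 0 < (Real.exp ((K*lam)*t))⁻¹ := inv_pos.mpr het
      calc g t = (Real.exp ((K*lam)*t))⁻¹ * (Real.exp ((K*lam)*t) * g t) := by
            field_simp
        _ ≤ (Real.exp ((K*lam)*t))⁻¹ *
            (g 0 - ε/(K*lam) + ε/(K*lam) * Real.exp ((K*lam)*t)) :=
            mul_le_mul_of_nonneg_left key2 hinv.le
        _ = (Real.exp ((K*lam)*t))⁻¹ * g 0 + ε/(K*lam)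
            - (Real.exp ((K*lam)*t))⁻¹ * (ε/(K*lam)) := by
            field_simp
            ring
        _ ≤ (Real.exp ((K*lam)*t))⁻¹ * g 0 + ε/(K*lam) := by
            have : 0 ≤ (Real.exp ((K*lam)*t))⁻¹ * (ε/(K*lam)) :=
              mul_nonneg hinv.le (div_nonneg hε0 hα.le)
            linarith
    have hsqWt : Real.sqrt (W t) ≤ g t := Real.sqrt_le_sqrt (by linarith)
    have hεα : ε/(K*lam) = (Real.sqrt n * nL)/(K*lam) + Real.sqrt η := by
      rw [hεdef]
      field_simp
    calc Real.sqrt (W t) ≤ g t := hsqWt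
      _ ≤ Real.exp (-((K*lam)*t)) * g 0 + ε/(K*lam) := hgt
      _ = Real.exp (-(K*lam)*t) * Real.sqrt (W 0 + η)
          + (Real.sqrt n * nL)/(K*lam) + Real.sqrt η := by
          rw [hεα, neg_mul]
          ring
  -- take η → 0⁺
  have hlim : Filter.Tendsto (fun η : ℝ => Real.exp (-(K*lam)*t) * Real.sqrt (W 0 + η)
      + (Real.sqrt n * nL)/(K*lam) + Real.sqrt η)
      (nhdsWithin 0 (Set.Ioi 0))
      (nhds (Real.exp (-(K*lam)*t) * Real.sqrt (W 0) + (Real.sqrt n * nL)/(K*lam))) := by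
    apply Filter.Tendsto.mono_left _ nhdsWithin_le_nhds
    have hc : Continuous fun η : ℝ => Real.exp (-(K*lam)*t) * Real.sqrt (W 0 + η)
        + (Real.sqrt n * nL)/(K*lam) + Real.sqrt η := by
      apply Continuous.add
      apply Continuous.add
      · exact continuous_const.mul ((continuous_const.add continuous_id).sqrt)
      · exact continuous_const
      · exact Real.continuous_sqrt
    have h0 := hc.tendsto 0
    simpa using h0
  have hle : Real.sqrt (W t) ≤ Real.exp (-(K*lam)*t) * Real.sqrt (W 0)
      + (Real.sqrt n * nL)/(K*lam) := by
    apply ge_of_tendsto hlim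
    filter_upwards [self_mem_nhdsWithin] with η hη
    exact key η hη
  -- conclude
  have hsn : Real.sqrt n ≤ (n:ℝ) := by
    have h1 : Real.sqrt (n:ℝ) ≤ Real.sqrt ((n:ℝ)^2) := Real.sqrt_le_sqrt (by nlinarith)
    rwa [Real.sqrt_sq hn0.le] at h1
  have hfrac : (Real.sqrt n * nL)/(K*lam) ≤ (n:ℝ)*nL/(K*lam) := by
    gcongr

  have hWt : W t = ∑ j, ‖ρ j t - (n:ℝ)⁻¹ • ∑ i, ρ i t‖^2 := hWeq t
  have hW0' : W 0 = ∑ j, ‖ρ j 0 - (n:ℝ)⁻¹ • ∑ i, ρ i 0‖^2 := hWeq 0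
  rw [← hWt, ← hW0']
  calc Real.sqrt (W t)
      ≤ Real.exp (-(K*lam)*t) * Real.sqrt (W 0) + (Real.sqrt n * nL)/(K*lam) := hle
    _ ≤ Real.exp (-(K*lam)*t) * Real.sqrt (W 0) + n*nL/(K*lam) := by linarith

end
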